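/- Suppose V_x : [0, z*) → ℝ is twice differentiable, V_x(0) > 0, V_x'(0) = 2V_{xp}(0), and V_x''(z) ≤ 4(H(0) − H̄) + 4Rz with R ≥ 0. If the cubic F(z) = V_x(0) + 2V_{xp}(0)z + 2(H(0) − H̄)z² + (2R/3)z³ has a positive root z₁, then V_x(z₁') ≤ 0 for some z₁' ≤ z₁; hence if V_x must remain positive on the interval of existence, then z* ≤ z₁. -/
import Mathlib


open Set

/-- Longitudinal singularity: if `V_x'' ≤ 4(H(0)-H̄) + 4Rz` and the cubic
`F(z) = V_x(0) + 2V_{xp}(0) z + 2(H(0)-H̄) z² + (2R/3) z³` has a positive root `z₁`,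
then `V_x` takes a nonpositive value at some `z₁' ≤ z₁`; hence if `V_x` must stay
positive on the interval of existence, then `zs ≤ z₁`. -/
theorem stmt_6 (zs H0 Hbar R Vxp0 z₁ : ℝ) (Vx Vx' Vx'' : ℝ → ℝ)
    (hzs : 0 < zs) (hR : 0 ≤ R) (hVx0 : 0 < Vx 0)
    (hd1 : ∀ z ∈ Ico (0:ℝ) zs, HasDerivAt Vx (Vx' z) z)
    (hd2 : ∀ z ∈ Ico (0:ℝ) zs, HasDerivAt Vx' (Vx'' z) z)
    (hineq : ∀ z ∈ Ico (0:ℝ) zs, Vx'' z ≤ 4 * (H0 - Hbar) + 4 * R * z)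
    (h0 : Vx' 0 = 2 * Vxp0)
    (hz₁pos : 0 < z₁)
    (hroot : Vx 0 + 2 * Vxp0 * z₁ + 2 * (H0 - Hbar) * z₁ ^ 2 + (2 * R / 3) * z₁ ^ 3 = 0) :
    (z₁ < zs → ∃ z₁', 0 ≤ z₁' ∧ z₁' ≤ z₁ ∧ Vx z₁' ≤ 0) ∧
      ((∀ z ∈ Ico (0:ℝ) zs, 0 < Vx z) → zs ≤ z₁) := by
  -- main claim: if z₁ < zs then Vx z₁ ≤ 0
  have key : z₁ < zs → Vx z₁ ≤ 0 := by
    intro hlt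
    set F : ℝ → ℝ := fun z => Vx 0 + 2 * Vxp0 * z + 2 * (H0 - Hbar) * z ^ 2 + (2 * R / 3) * z ^ 3
      with hF
    set F' : ℝ → ℝ := fun z => 2 * Vxp0 + 4 * (H0 - Hbar) * z + 2 * R * z ^ 2 with hF'
    have hFd : ∀ z : ℝ, HasDerivAt F (F' z) z := by
      intro z
      have h1 : HasDerivAt F (0 + 2 * Vxp0 * 1 + 2 * (H0 - Hbar) * (↑2 * z ^ 1)
          + 2 * R / 3 * (↑3 * z ^ 2)) z := by
        exact (((hasDerivAt_const z (Vx 0)).add ((hasDerivAt_id z).const_mul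
          (2 * Vxp0))).add ((hasDerivAt_pow 2 z).const_mul (2 * (H0 - Hbar)))).add
          ((hasDerivAt_pow 3 z).const_mul (2 * R / 3))
      convert h1 using 1
      push_cast
      ring
    have hF'd : ∀ z : ℝ, HasDerivAt F' (4 * (H0 - Hbar) + 4 * R * z) z := by
      intro z
      have h1 : HasDerivAt F' (0 + 4 * (H0 - Hbar) * 1 + 2 * R * (↑2 * z ^ 1)) z := by
        exact ((hasDerivAt_const z (2 * Vxp0)).add ((hasDerivAt_id z).const_mul
          (4 * (H0 - Hbar)))).add ((hasDerivAt_pow 2 z).const_mul (2 * R))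
      convert h1 using 1
      push_cast
      ring
    have hsub : Icc (0:ℝ) z₁ ⊆ Ico (0:ℝ) zs := fun x hx =>
      ⟨hx.1, lt_of_le_of_lt hx.2 hlt⟩
    -- g = Vx - F, g' = Vx' - F'
    set g : ℝ → ℝ := fun z => Vx z - F z with hg
    set g' : ℝ → ℝ := fun z => Vx' z - F' z with hg'
    have hgd : ∀ z ∈ Ico (0:ℝ) zs, HasDerivAt g (g' z) z := fun z hz =>
      (hd1 z hz).sub (hFd z)
    have hg'd : ∀ z ∈ Ico (0:ℝ) zs, HasDerivAt g' (Vx'' z - (4 * (H0 - Hbar) + 4 * R * z)) z :=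
      fun z hz => (hd2 z hz).sub (hF'd z)
    -- g' is antitone on [0, z₁]
    have hg'anti : AntitoneOn g' (Icc 0 z₁) := by
      apply antitoneOn_of_deriv_nonpos (convex_Icc 0 z₁)
      · exact fun x hx => (hg'd x (hsub hx)).continuousAt.continuousWithinAt
      · intro x hx
        rw [interior_Icc] at hx
        exact ((hg'd x (hsub ⟨le_of_lt hx.1, le_of_lt hx.2⟩)).differentiableAt).differentiableWithinAt
      · intro x hx
        rw [interior_Icc] at hx
        have hx' : x ∈ Ico (0:ℝ) zs := hsub ⟨le_of_lt hx.1, le_of_lt hx.2⟩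
        rw [(hg'd x hx').deriv]
        linarith [hineq x hx']
    have hg'0 : g' 0 = 0 := by simp [hg', hF', h0]
    have hg'nonpos : ∀ x ∈ Icc (0:ℝ) z₁, g' x ≤ 0 := by
      intro x hx
      have := hg'anti (left_mem_Icc.mpr (le_of_lt hz₁pos)) hx hx.1
      linarith
    -- hence g antitone on [0, z₁]
    have hganti : AntitoneOn g (Icc 0 z₁) := by
      apply antitoneOn_of_deriv_nonpos (convex_Icc 0 z₁)
      · exact fun x hx => (hgd x (hsub hx)).continuousAt.continuousWithinAt
      · intro x hx
        rw [interior_Icc] at hx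
        exact ((hgd x (hsub ⟨le_of_lt hx.1, le_of_lt hx.2⟩)).differentiableAt).differentiableWithinAt
      · intro x hx
        rw [interior_Icc] at hx
        have hx1 : x ∈ Icc (0:ℝ) z₁ := ⟨le_of_lt hx.1, le_of_lt hx.2⟩
        rw [(hgd x (hsub hx1)).deriv]
        exact hg'nonpos x hx1
    have hgz₁ : g z₁ ≤ g 0 :=
      hganti (left_mem_Icc.mpr (le_of_lt hz₁pos)) (right_mem_Icc.mpr (le_of_lt hz₁pos))
        (le_of_lt hz₁pos)
    have hg0 : g 0 = 0 := by simp [hg, hF]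
    have : Vx z₁ ≤ F z₁ := by
      have := hgz₁
      rw [hg0] at this
      simpa [hg, sub_nonpos] using this
    calc Vx z₁ ≤ F z₁ := this
      _ = 0 := hroot
  constructor
  · intro hlt
    exact ⟨z₁, le_of_lt hz₁pos, le_refl z₁, key hlt⟩
  · intro hpos
    by_contra hcon
    push_neg at hcon
    have := hpos z₁ ⟨le_of_lt hz₁pos, hcon⟩
    linarith [key hcon]
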